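/- Let N ≥ 1 and k be integers, and let L be the subgroup of the topological abelian group ℤ × ℝ generated by (N, 0) and (k, 1). Then the group of continuous characters of the quotient topological group (ℤ × ℝ)/L — i.e., continuous group homomorphisms from (ℤ × ℝ)/L to the circle group ℝ/ℤ (equivalently, its Pontryagin dual) — is isomorphic to the quotient group (ℤ × ℤ)/⟨(N, k)⟩; explicitly, (m, n) ∈ ℤ × ℤ corresponds to the character induced by (a, t) ↦ (m a)/N + (n − k m/N) t mod ℤ, and this assignment is surjective with kernel generated by (N, k). -/

import Mathlib

noncomputable section

/-- The subgroup `L` of `ℤ × ℝ` generated by `(N, 0)` and `(k, 1)`. -/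
def latticeL (N k : ℤ) : AddSubgroup (ℤ × ℝ) :=
  AddSubgroup.closure {((N : ℤ), (0 : ℝ)), ((k : ℤ), (1 : ℝ))}

/-- The quotient topological group `(ℤ × ℝ)/L`, i.e. `Λ_{ℤ/Nℤ}(k)`. -/
def LambdaZN (N k : ℤ) : Type := (ℤ × ℝ) ⧸ latticeL N k

instance (N k : ℤ) : AddCommGroup (LambdaZN N k) :=
  inferInstanceAs (AddCommGroup ((ℤ × ℝ) ⧸ latticeL N k))

instance (N k : ℤ) : TopologicalSpace (LambdaZN N k) :=
  inferInstanceAs (TopologicalSpace ((ℤ × ℝ) ⧸ latticeL N k))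



open Set AddSubgroup

lemma sub_int_of_coe_eq {r s : ℝ} (he : (r : AddCircle (1:ℝ)) = s) : ∃ z : ℤ, r - s = z := by
  have : ((r - s : ℝ) : AddCircle (1:ℝ)) = 0 := by
    rw [AddCircle.coe_sub, he, sub_self]
  obtain ⟨z, hz⟩ := (AddCircle.coe_eq_zero_iff (1:ℝ)).mp this
  exact ⟨z, by simpa using hz.symm⟩

lemma mk_inj_small {r s : ℝ} (h : |r - s| < 1) (he : (r : AddCircle (1:ℝ)) = s) : r = s := by
  obtain ⟨z, hz⟩ := sub_int_of_coe_eq he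
  rw [hz] at h
  have hz0 : z = 0 := by
    have h2 := abs_lt.mp h
    have h3 : (-1 : ℝ) < (z : ℝ) ∧ (z:ℝ) < 1 := h2
    exact_mod_cast (by omega : ∀ w : ℤ, -1 < w → w < 1 → w = 0) z
      (by exact_mod_cast h3.1) (by exact_mod_cast h3.2)
  rw [hz0, Int.cast_zero] at hz
  linarith



lemma char_real_eq (φ : ℝ →+ AddCircle (1:ℝ)) (hφ : Continuous φ) :
    ∃ α : ℝ, ∀ t : ℝ, φ t = ((α * t : ℝ) : AddCircle (1:ℝ)) := by
  -- Step A: find δ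
  obtain ⟨δ, hδ, hsmall⟩ : ∃ δ : ℝ, 0 < δ ∧ ∀ t : ℝ, |t| ≤ δ →
      ∃ r ∈ Ioo (-(1/4) : ℝ) (1/4), φ t = (r : AddCircle (1:ℝ)) := by
    have hopen : IsOpen ((fun r : ℝ => (r : AddCircle (1:ℝ))) '' Ioo (-(1/4)) (1/4)) :=
      QuotientAddGroup.isOpenMap_coe _ isOpen_Ioo
    have hmem : ((fun r : ℝ => (r : AddCircle (1:ℝ))) '' Ioo (-(1/4)) (1/4)) ∈ nhds (φ 0) := by
      rw [map_zero]
      exact hopen.mem_nhds ⟨0, by norm_num, rfl⟩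
    have hpre := hφ.continuousAt (x := 0) hmem
    obtain ⟨ε, hε, hball⟩ := Metric.mem_nhds_iff.mp hpre
    refine ⟨ε/2, by linarith, fun t ht => ?_⟩
    have : t ∈ Metric.ball (0:ℝ) ε := by
      simp only [Metric.mem_ball, Real.dist_eq, sub_zero]; linarith [abs_nonneg t]
    obtain ⟨r, hr, hrt⟩ := hball this
    exact ⟨r, hr, hrt.symm⟩
  -- Step B: choose F
  have hex : ∀ t ∈ Icc (-δ) δ, ∃ r, r ∈ Ioo (-(1/4) : ℝ) (1/4) ∧ φ t = (r : AddCircle (1:ℝ)) := by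
    intro t ht
    obtain ⟨r, hr1, hr2⟩ := hsmall t (abs_le.mpr ⟨ht.1, ht.2⟩)
    exact ⟨r, hr1, hr2⟩
  choose! F hF1 hF2 using hex
  -- Step C: additivity
  have hadd : ∀ s t : ℝ, s ∈ Icc (-δ) δ → t ∈ Icc (-δ) δ → s + t ∈ Icc (-δ) δ →
      F (s + t) = F s + F t := by
    intro s t hs ht hst
    have h1 := hF1 s hs; have h2 := hF1 t ht; have h3 := hF1 (s+t) hst
    apply mk_inj_small
    · rw [mem_Ioo] at h1 h2 h3
      rw [abs_lt]; constructor <;> nlinarith [h1.1, h1.2, h2.1, h2.2, h3.1, h3.2]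
    · rw [← hF2 (s+t) hst, AddCircle.coe_add, ← hF2 s hs, ← hF2 t ht, map_add]
  -- Step D: F (j * (δ/n)) = j * F (δ/n) for j ≤ n
  have hD : ∀ n : ℕ, 0 < n → ∀ j : ℕ, j ≤ n → F ((j : ℝ) * (δ / n)) = (j : ℝ) * F (δ / n) := by
    intro n hn
    have hx : (0:ℝ) < δ / n := div_pos hδ (by exact_mod_cast hn)
    have hmem : ∀ j : ℕ, j ≤ n → (j : ℝ) * (δ / n) ∈ Icc (-δ) δ := by
      intro j hj
      constructor
      · nlinarith [mul_nonneg (Nat.cast_nonneg (α := ℝ) j) hx.le]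
      · have : (j:ℝ) * (δ/n) ≤ (n:ℝ) * (δ/n) :=
          mul_le_mul_of_nonneg_right (by exact_mod_cast hj) hx.le
        rwa [mul_div_cancel₀ δ (by positivity : (n:ℝ) ≠ 0)] at this
    intro j hj
    induction j with
    | zero =>
      simp only [Nat.cast_zero, zero_mul]
      apply mk_inj_small
      · rw [sub_zero]
        have := (hF1 0 ⟨by linarith, by linarith⟩)
        rw [mem_Ioo] at this; rw [abs_lt]; constructor <;> linarith
      · rw [← hF2 0 ⟨by linarith, by linarith⟩, map_zero, QuotientAddGroup.mk_zero]
    | succ i ih =>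
      have hi : i ≤ n := Nat.le_of_succ_le hj
      have : ((i+1 : ℕ) : ℝ) * (δ/n) = (i:ℝ) * (δ/n) + δ/n := by push_cast; ring
      rw [this, hadd _ _ (hmem i hi) ⟨by linarith, by
            have := hmem 1 hn; simpa using this.2⟩ (by rw [← this]; exact hmem _ hj),
        ih hi]
      push_cast; ring
  set α := F δ / δ with hα
  refine ⟨α, ?_⟩
  -- Step E: rational points of [0, δ]
  have hE : ∀ q : ℚ, 0 ≤ q → q ≤ 1 → φ ((q:ℝ) * δ) = ((α * ((q:ℝ) * δ) : ℝ) : AddCircle (1:ℝ)) := by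
    intro q hq0 hq1
    set n := q.den with hn
    set m := q.num.toNat with hm
    have hnpos : 0 < n := q.pos
    have hq : (q : ℝ) = (m : ℝ) / (n : ℝ) := by
      rw [Rat.cast_def]
      congr 1
      · have h2 : 0 ≤ q.num := Rat.num_nonneg.mpr hq0
        rw [hm]; exact_mod_cast (Int.toNat_of_nonneg h2).symm
    have hne : (n:ℝ) ≠ 0 := by positivity
    have hmn : m ≤ n := by
      have h1 : (m:ℝ)/(n:ℝ) ≤ 1 := by
        rw [← hq]; exact_mod_cast hq1
      rw [div_le_one (by positivity)] at h1
      exact_mod_cast h1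
    have hqd : (q:ℝ) * δ = (m:ℝ) * (δ / n) := by rw [hq]; ring
    have hdd : δ = (n:ℝ) * (δ / n) := by field_simp
    have hFq : F ((q:ℝ) * δ) = (m:ℝ) * F (δ / n) := by rw [hqd]; exact hD n hnpos m hmn
    have hFδ : F δ = (n:ℝ) * F (δ / n) := by
      nth_rewrite 1 [hdd]; exact hD n hnpos n le_rfl
    have hmemq : (q:ℝ) * δ ∈ Icc (-δ) δ := by
      constructor
      · nlinarith [mul_nonneg (by exact_mod_cast hq0 : (0:ℝ) ≤ (q:ℝ)) hδ.le]
      · nlinarith [(by exact_mod_cast hq1 : (q:ℝ) ≤ 1)]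
    rw [hF2 _ hmemq, hFq]
    congr 1
    rw [hα, hFδ, hq]
    field_simp
  -- Step F: all points of [0, δ]
  have hF : ∀ t ∈ Icc 0 δ, φ t = ((α * t : ℝ) : AddCircle (1:ℝ)) := by
    intro t ht
    -- approximating rational sequence
    have happrox : ∀ j : ℕ, ∃ q : ℚ, t/δ - 1/(j+1) < (q:ℝ) ∧ (q:ℝ) < t/δ + 1/(j+1) := by
      intro j
      obtain ⟨q, h1, h2⟩ := exists_rat_btwn (by
        have : (0:ℝ) < 1/(j+1) := by positivity
        linarith : t/δ - 1/(j+1) < t/δ + 1/(j+1))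
      exact ⟨q, h1, h2⟩
    choose u hu1 hu2 using happrox
    have htd : t/δ ∈ Icc (0:ℝ) 1 := by
      constructor
      · exact div_nonneg ht.1 hδ.le
      · rw [div_le_one hδ]; exact ht.2
    set w : ℕ → ℚ := fun j => max 0 (min 1 (u j)) with hw
    have hw0 : ∀ j, 0 ≤ w j := fun j => le_max_left _ _
    have hw1 : ∀ j, w j ≤ 1 := fun j => max_le (by norm_num) (min_le_left _ _)
    have hucast : Filter.Tendsto (fun j => ((u j : ℝ))) Filter.atTop (nhds (t/δ)) := by
      have h0 : Filter.Tendsto (fun j : ℕ => t/δ - 1/(j+1)) Filter.atTop (nhds (t/δ)) := by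
        have := tendsto_one_div_add_atTop_nhds_zero_nat (𝕜 := ℝ)
        simpa using Filter.Tendsto.const_sub (t/δ) this
      have h1 : Filter.Tendsto (fun j : ℕ => t/δ + 1/(j+1)) Filter.atTop (nhds (t/δ)) := by
        have := tendsto_one_div_add_atTop_nhds_zero_nat (𝕜 := ℝ)
        simpa using Filter.Tendsto.const_add (t/δ) this
      exact tendsto_of_tendsto_of_tendsto_of_le_of_le h0 h1
        (fun j => (hu1 j).le) (fun j => (hu2 j).le)
    have hwcast : Filter.Tendsto (fun j => ((w j : ℝ))) Filter.atTop (nhds (t/δ)) := by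
      have : (fun j => ((w j : ℝ))) = fun j => max 0 (min 1 ((u j : ℝ))) := by
        funext j; rw [hw]; push_cast; rfl
      rw [this]
      have hmin : Filter.Tendsto (fun j => min 1 ((u j : ℝ))) Filter.atTop (nhds (min 1 (t/δ))) :=
        Filter.Tendsto.min tendsto_const_nhds hucast
      have := Filter.Tendsto.max (tendsto_const_nhds (x := (0:ℝ))) hmin
      rwa [min_eq_right htd.2, max_eq_right htd.1] at this
    have htend : Filter.Tendsto (fun j => ((w j : ℝ)) * δ) Filter.atTop (nhds t) := by
      have := hwcast.mul_const δ
      rwa [div_mul_cancel₀ t hδ.ne'] at this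
    have hL : Filter.Tendsto (fun j => φ (((w j : ℝ)) * δ)) Filter.atTop (nhds (φ t)) :=
      (hφ.tendsto t).comp htend
    have hR : Filter.Tendsto (fun j => ((α * (((w j : ℝ)) * δ) : ℝ) : AddCircle (1:ℝ)))
        Filter.atTop (nhds ((α * t : ℝ) : AddCircle (1:ℝ))) := by
      exact ((AddCircle.continuous_mk' (1:ℝ)).tendsto _).comp
        ((htend.const_mul α))
    have heq : (fun j => φ (((w j : ℝ)) * δ)) =
        fun j => ((α * (((w j : ℝ)) * δ) : ℝ) : AddCircle (1:ℝ)) := by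
      funext j
      exact hE (w j) (hw0 j) (hw1 j)
    rw [heq] at hL
    exact tendsto_nhds_unique hL hR
  -- Step G: all nonneg t
  have hG : ∀ t : ℝ, 0 ≤ t → φ t = ((α * t : ℝ) : AddCircle (1:ℝ)) := by
    intro t ht
    obtain ⟨c, hc⟩ := exists_nat_gt (t/δ)
    have hc2 : t / (2:ℝ)^c ≤ δ := by
      have h1 : (c:ℝ) ≤ 2^c := by exact_mod_cast Nat.le_of_lt (Nat.lt_two_pow_self (n := c))
      have h2 : t < (c:ℝ) * δ := by
        rw [div_lt_iff₀ hδ] at hc; linarith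
      have h3 : (0:ℝ) < 2^c := by positivity
      rw [div_le_iff₀ h3]
      nlinarith
    have hmem : t / 2^c ∈ Icc (0:ℝ) δ := ⟨by positivity, hc2⟩
    have h4 : t = (2^c : ℕ) • (t / 2^c) := by
      rw [nsmul_eq_mul]; push_cast; field_simp
    calc φ t = (2^c : ℕ) • φ (t / 2^c) := by rw [← map_nsmul, ← h4]
      _ = (2^c : ℕ) • ((α * (t / 2^c) : ℝ) : AddCircle (1:ℝ)) := by rw [hF _ hmem]
      _ = (((2^c : ℕ) • (α * (t / 2^c)) : ℝ) : AddCircle (1:ℝ)) := by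
          rw [← AddCircle.coe_nsmul]
      _ = ((α * t : ℝ) : AddCircle (1:ℝ)) := by
          congr 1; rw [nsmul_eq_mul]; push_cast; field_simp
  -- Step H: all t
  intro t
  rcases le_or_gt 0 t with h | h
  · exact hG t h
  · have := hG (-t) (by linarith)
    have h2 : φ t = - φ (-t) := by rw [← map_neg, neg_neg]
    rw [h2, this, ← AddCircle.coe_neg]
    congr 1; ring
namespace Chars15

def mkQ : ℝ →+ AddCircle (1:ℝ) := QuotientAddGroup.mk' (AddSubgroup.zmultiples (1:ℝ))

lemma mkQ_apply (r : ℝ) : mkQ r = (r : AddCircle (1:ℝ)) := rfl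

lemma mkQ_cont : Continuous mkQ := AddCircle.continuous_mk' 1

lemma coe_int_eq_zero (z : ℤ) : ((z : ℝ) : AddCircle (1:ℝ)) = 0 :=
  (AddCircle.coe_eq_zero_iff (1:ℝ)).mpr ⟨z, by simp⟩

def linZR (c d : ℝ) : ℤ × ℝ →+ ℝ where
  toFun p := c * (p.1 : ℝ) + d * p.2
  map_zero' := by simp
  map_add' p q := by
    simp only [Prod.fst_add, Prod.snd_add]
    push_cast
    ring

lemma linZR_cont (c d : ℝ) : Continuous (linZR c d) := by
  apply Continuous.add
  · exact continuous_const.mul ((continuous_of_discreteTopology (f := fun z : ℤ => (z : ℝ))).comp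
      continuous_fst)
  · exact continuous_const.mul continuous_snd

variable (N k : ℤ)

def preChar (m n : ℤ) : ℤ × ℝ →+ AddCircle (1:ℝ) :=
  mkQ.comp (linZR ((m:ℝ)/(N:ℝ)) ((n:ℝ) - (k:ℝ)*(m:ℝ)/(N:ℝ)))

lemma preChar_apply (m n a : ℤ) (t : ℝ) :
    preChar N k m n (a, t) =
      ((((m:ℝ)/(N:ℝ)) * (a:ℝ) + ((n:ℝ) - (k:ℝ)*(m:ℝ)/(N:ℝ)) * t : ℝ) : AddCircle (1:ℝ)) := rfl

lemma latticeL_le_ker (hN : (N : ℝ) ≠ 0) (m n : ℤ) : latticeL N k ≤ (preChar N k m n).ker := by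
  rw [latticeL, AddSubgroup.closure_le]
  rintro x (rfl | rfl)
  · rw [SetLike.mem_coe, AddMonoidHom.mem_ker, preChar_apply]
    have h1 : ((m:ℝ)/(N:ℝ)) * (N:ℝ) + ((n:ℝ) - (k:ℝ)*(m:ℝ)/(N:ℝ)) * 0 = (m:ℝ) := by
      field_simp; ring
    rw [h1]; exact coe_int_eq_zero m
  · rw [SetLike.mem_coe, AddMonoidHom.mem_ker, preChar_apply]
    have h1 : ((m:ℝ)/(N:ℝ)) * (k:ℝ) + ((n:ℝ) - (k:ℝ)*(m:ℝ)/(N:ℝ)) * 1 = (n:ℝ) := by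
      field_simp; ring
    rw [h1]; exact coe_int_eq_zero n

def charOf (hN : (N : ℝ) ≠ 0) (m n : ℤ) : LambdaZN N k →+ AddCircle (1:ℝ) :=
  QuotientAddGroup.lift (latticeL N k) (preChar N k m n)
    (fun x hx => AddMonoidHom.mem_ker.mp (latticeL_le_ker N k hN m n hx))

lemma charOf_apply (hN : (N : ℝ) ≠ 0) (m n a : ℤ) (t : ℝ) :
    charOf N k hN m n (QuotientAddGroup.mk ((a, t) : ℤ × ℝ)) =
      ((((m:ℝ)/(N:ℝ)) * (a:ℝ) + ((n:ℝ) - (k:ℝ)*(m:ℝ)/(N:ℝ)) * t : ℝ) : AddCircle (1:ℝ)) := rfl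

lemma charOf_cont (hN : (N : ℝ) ≠ 0) (m n : ℤ) : Continuous (charOf N k hN m n) :=
  continuous_quot_lift _ (mkQ_cont.comp (linZR_cont _ _))

def contCharOf (hN : (N : ℝ) ≠ 0) (m n : ℤ) : ContinuousAddMonoidHom (LambdaZN N k) (AddCircle (1:ℝ)) :=
  { charOf N k hN m n with continuous_toFun := charOf_cont N k hN m n }

lemma contCharOf_apply (hN : (N : ℝ) ≠ 0) (m n a : ℤ) (t : ℝ) :
    contCharOf N k hN m n (QuotientAddGroup.mk ((a, t) : ℤ × ℝ)) =
      ((((m:ℝ)/(N:ℝ)) * (a:ℝ) + ((n:ℝ) - (k:ℝ)*(m:ℝ)/(N:ℝ)) * t : ℝ) : AddCircle (1:ℝ)) := rfl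

def PhiHom (hN : (N : ℝ) ≠ 0) : ℤ × ℤ →+ ContinuousAddMonoidHom (LambdaZN N k) (AddCircle (1:ℝ)) :=
  AddMonoidHom.mk' (fun mn => contCharOf N k hN mn.1 mn.2) (by
    intro p q
    apply ContinuousAddMonoidHom.ext
    intro x
    induction x using QuotientAddGroup.induction_on with | H r =>
    obtain ⟨a, t⟩ := r
    show contCharOf N k hN (p.1 + q.1) (p.2 + q.2) (QuotientAddGroup.mk ((a, t) : ℤ × ℝ)) =
      contCharOf N k hN p.1 p.2 (QuotientAddGroup.mk ((a, t) : ℤ × ℝ)) +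
        contCharOf N k hN q.1 q.2 (QuotientAddGroup.mk ((a, t) : ℤ × ℝ))
    rw [contCharOf_apply, contCharOf_apply, contCharOf_apply, ← AddCircle.coe_add]
    congr 1
    push_cast
    ring)

lemma PhiHom_apply (hN : (N : ℝ) ≠ 0) (m n a : ℤ) (t : ℝ) :
    PhiHom N k hN (m, n) (QuotientAddGroup.mk ((a, t) : ℤ × ℝ)) =
      ((((m:ℝ)/(N:ℝ)) * (a:ℝ) + ((n:ℝ) - (k:ℝ)*(m:ℝ)/(N:ℝ)) * t : ℝ) : AddCircle (1:ℝ)) := rfl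

end Chars15

open Chars15

/-- The group of continuous characters of `(ℤ × ℝ)/⟨(N,0),(k,1)⟩`
(valued in the circle `ℝ/ℤ`) is isomorphic to `(ℤ × ℤ)/⟨(N, k)⟩`: explicitly,
`(m, n)` corresponds to the character induced by `(a, t) ↦ ma/N + (n − km/N)t mod ℤ`,
and this assignment is surjective with kernel generated by `(N, k)`. -/
theorem characters_of_LambdaZN (N k : ℤ) (hN : 1 ≤ N) :
    ∃ Phi : ℤ × ℤ →+ ContinuousAddMonoidHom (LambdaZN N k) (AddCircle (1 : ℝ)),
      (∀ (m n a : ℤ) (t : ℝ),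
        Phi (m, n) (QuotientAddGroup.mk ((a, t) : ℤ × ℝ)) =
          ((((m : ℝ) * (a : ℝ)) / (N : ℝ) +
            ((n : ℝ) - (k : ℝ) * (m : ℝ) / (N : ℝ)) * t : ℝ) : AddCircle (1 : ℝ))) ∧
      Function.Surjective Phi ∧
      Phi.ker = AddSubgroup.zmultiples ((N, k) : ℤ × ℤ) ∧
      Nonempty (((ℤ × ℤ) ⧸ AddSubgroup.zmultiples ((N, k) : ℤ × ℤ)) ≃+
        ContinuousAddMonoidHom (LambdaZN N k) (AddCircle (1 : ℝ))) := by
  have hN0 : (N : ℝ) ≠ 0 := by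
    have : (1:ℝ) ≤ (N:ℝ) := by exact_mod_cast hN
    linarith
  -- evaluation formula
  have heval : ∀ (m n a : ℤ) (t : ℝ),
      PhiHom N k hN0 (m, n) (QuotientAddGroup.mk ((a, t) : ℤ × ℝ)) =
        ((((m : ℝ) * (a : ℝ)) / (N : ℝ) +
          ((n : ℝ) - (k : ℝ) * (m : ℝ) / (N : ℝ)) * t : ℝ) : AddCircle (1 : ℝ)) := by
    intro m n a t
    rw [PhiHom_apply]
    congr 1
    ring
  -- surjectivity
  have hsurj : Function.Surjective (PhiHom N k hN0) := by
    intro χ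
    set ψ : ℤ × ℝ →+ AddCircle (1:ℝ) :=
      χ.toAddMonoidHom.comp (QuotientAddGroup.mk' (latticeL N k)) with hψdef
    have hψ_apply : ∀ p : ℤ × ℝ, ψ p = χ (QuotientAddGroup.mk p) := fun p => rfl
    have hψcont : Continuous ψ := χ.continuous_toFun.comp continuous_quotient_mk'
    have hL0 : ∀ p ∈ latticeL N k, ψ p = 0 := by
      intro p hp
      rw [hψ_apply, (QuotientAddGroup.eq_zero_iff p).mpr hp]; exact map_zero χ
    obtain ⟨α, hα⟩ := char_real_eq (ψ.comp (AddMonoidHom.inr ℤ ℝ))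
      (hψcont.comp (continuous_const.prodMk continuous_id))
    have hψ0t : ∀ t : ℝ, ψ ((0:ℤ), t) = ((α * t : ℝ) : AddCircle (1:ℝ)) := fun t => hα t
    have hN00 : ψ ((N:ℤ), (0:ℝ)) = 0 :=
      hL0 _ (AddSubgroup.subset_closure (Set.mem_insert _ _))
    have hk1 : ψ ((k:ℤ), (1:ℝ)) = 0 :=
      hL0 _ (AddSubgroup.subset_closure (Set.mem_insert_of_mem _ rfl))
    obtain ⟨r, hr⟩ := QuotientAddGroup.mk_surjective (ψ ((1:ℤ), (0:ℝ)))
    have hsmul : (N : ℤ) • (((1:ℤ), (0:ℝ)) : ℤ × ℝ) = ((N:ℤ), (0:ℝ)) := by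
      ext
      · simp
      · simp
    have h1 : (((N:ℝ) * r : ℝ) : AddCircle (1:ℝ)) = 0 := by
      have h2 : (N:ℤ) • ((r : ℝ) : AddCircle (1:ℝ)) = 0 := by
        rw [hr, ← map_zsmul, hsmul, hN00]
      rwa [← AddCircle.coe_zsmul, zsmul_eq_mul] at h2
    obtain ⟨j, hj⟩ := (AddCircle.coe_eq_zero_iff (1:ℝ)).mp h1
    have hj' : (j:ℝ) = (N:ℝ) * r := by simpa using hj
    have hrval : r = (j:ℝ)/(N:ℝ) := by
      rw [eq_div_iff hN0]; linarith
    have hsplit : ∀ (a : ℤ) (t : ℝ),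
        ψ (a, t) = (((a:ℝ) * ((j:ℝ)/(N:ℝ)) + α * t : ℝ) : AddCircle (1:ℝ)) := by
      intro a t
      have hdecomp : ((a, t) : ℤ × ℝ) = a • (((1:ℤ), (0:ℝ)) : ℤ × ℝ) + ((0:ℤ), t) := by
        ext
        · simp
        · simp
      rw [hdecomp, map_add, map_zsmul, ← hr, hψ0t, ← AddCircle.coe_zsmul, ← AddCircle.coe_add]
      congr 1
      rw [hrval, zsmul_eq_mul]
    have hkj : ∃ z : ℤ, (z:ℝ) = (k:ℝ) * ((j:ℝ)/(N:ℝ)) + α := by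
      have h3 := hk1
      rw [hsplit k 1, mul_one] at h3
      obtain ⟨z, hz⟩ := (AddCircle.coe_eq_zero_iff (1:ℝ)).mp h3
      exact ⟨z, by simpa using hz⟩
    obtain ⟨z, hz⟩ := hkj
    refine ⟨(j, z), ?_⟩
    apply ContinuousAddMonoidHom.ext
    intro x
    induction x using QuotientAddGroup.induction_on with | H p =>
    obtain ⟨a, t⟩ := p
    rw [PhiHom_apply, ← hψ_apply, hsplit a t]
    congr 1
    have hαval : α = (z:ℝ) - (k:ℝ) * (j:ℝ) / (N:ℝ) := by
      rw [hz]; ring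
    rw [hαval]
    ring
  -- kernel
  have hker : (PhiHom N k hN0).ker = AddSubgroup.zmultiples ((N, k) : ℤ × ℤ) := by
    apply SetLike.ext
    rintro ⟨m, n⟩
    constructor
    · intro h
      rw [AddMonoidHom.mem_ker] at h
      have hval : ∀ (a : ℤ) (t : ℝ),
          ((((m:ℝ)/(N:ℝ)) * (a:ℝ) + ((n:ℝ) - (k:ℝ)*(m:ℝ)/(N:ℝ)) * t : ℝ) : AddCircle (1:ℝ))
            = 0 := by
        intro a t
        rw [← PhiHom_apply N k hN0, h]
        rfl
      set β := (n:ℝ) - (k:ℝ)*(m:ℝ)/(N:ℝ) with hβdef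
      have hβ : β = 0 := by
        by_contra hβ0
        have h2 := hval 0 (1/(2*β))
        have h3 : ((m:ℝ)/(N:ℝ)) * ((0:ℤ):ℝ) + β * (1/(2*β)) = 1/2 := by
          push_cast
          field_simp
          ring
        rw [h3] at h2
        obtain ⟨w, hw⟩ := (AddCircle.coe_eq_zero_iff (1:ℝ)).mp h2
        have hw' : (w:ℝ) = 1/2 := by simpa using hw
        have hw2 : ((2*w : ℤ) : ℝ) = ((1:ℤ):ℝ) := by push_cast; linarith
        have : (2*w : ℤ) = 1 := by exact_mod_cast hw2
        omega
      have h4 := hval 1 0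
      have h5 : ((m:ℝ)/(N:ℝ)) * ((1:ℤ):ℝ) + β * 0 = (m:ℝ)/(N:ℝ) := by push_cast; ring
      rw [h5] at h4
      obtain ⟨z, hz⟩ := (AddCircle.coe_eq_zero_iff (1:ℝ)).mp h4
      have hz' : (z:ℝ) = (m:ℝ)/(N:ℝ) := by simpa using hz
      have hm : m = N * z := by
        rw [eq_div_iff hN0] at hz'
        exact_mod_cast (by linarith : (m:ℝ) = (N:ℝ) * (z:ℝ))
      have hn : n = k * z := by
        have hβ' : (n:ℝ) = (k:ℝ)*(m:ℝ)/(N:ℝ) := by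
          have := sub_eq_zero.mp hβ
          linarith
        have hmr : (m:ℝ) = (N:ℝ) * (z:ℝ) := by exact_mod_cast hm
        have : (n:ℝ) = (k:ℝ)*(z:ℝ) := by
          rw [hβ', hmr]
          field_simp
        exact_mod_cast this
      exact AddSubgroup.mem_zmultiples_iff.mpr ⟨z, by
        ext
        · simp only [Prod.smul_fst, smul_eq_mul]; rw [hm]; ring
        · simp only [Prod.smul_snd, smul_eq_mul]; rw [hn]; ring⟩
    · intro h
      obtain ⟨z, hz⟩ := AddSubgroup.mem_zmultiples_iff.mp h
      rw [AddMonoidHom.mem_ker, ← hz, map_zsmul]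
      have hNk : PhiHom N k hN0 ((N, k) : ℤ × ℤ) = 0 := by
        apply ContinuousAddMonoidHom.ext
        intro x
        induction x using QuotientAddGroup.induction_on with | H p =>
        obtain ⟨a, t⟩ := p
        rw [PhiHom_apply]
        have hsimp : ((N:ℝ)/(N:ℝ)) * (a:ℝ) + ((k:ℝ) - (k:ℝ)*(N:ℝ)/(N:ℝ)) * t = (a:ℝ) := by
          field_simp; ring
        rw [hsimp, coe_int_eq_zero a]
        rfl
      rw [hNk]; exact zsmul_zero z
  exact ⟨PhiHom N k hN0, heval, hsurj, hker,
    ⟨(QuotientAddGroup.quotientAddEquivOfEq hker).symm.trans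
      (QuotientAddGroup.quotientKerEquivOfSurjective _ hsurj)⟩⟩

end
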